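/- Let G = (X,E) be a finite d-regular graph with simple random walk rates Q(x,y) = 1/d for {x,y} ∈ E and uniform measure π(x) = 1/|X|. For every subgraph with edge set F, all ρ : X → ℝ₊ and ψ : X → ℝ, the on-diagonal Bochner sum B^on_F(ρ,ψ) := Σ_{{x,y}∈F} (μ/d²)·(1/2)(ψ(x)−ψ(y))²·[4θ(ρ(x),ρ(y)) + ∂₁θ(ρ(x),ρ(y))(ρ(y)−ρ(x)) + ∂₂θ(ρ(x),ρ(y))(ρ(x)−ρ(y))] satisfies B^on_F(ρ,ψ) ≥ (2/d)·A_F(ρ,ψ), where A_F(ρ,ψ) := Σ_{{x,y}∈F} (μ/d)(ψ(x)−ψ(y))² θ(ρ(x),ρ(y)) and μ = 1/|X|. -/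

import Mathlib

/-- The logarithmic mean `θ(s,t) = ∫₀¹ s^(1-p) t^p dp`. -/
noncomputable def logMean (s t : ℝ) : ℝ := ∫ p in (0:ℝ)..1, s ^ (1 - p) * t ^ p

/-- Partial derivative of the logarithmic mean in the first argument. -/
noncomputable def logMean₁ (s t : ℝ) : ℝ := deriv (fun u => logMean u t) s

/-- Partial derivative of the logarithmic mean in the second argument. -/
noncomputable def logMean₂ (s t : ℝ) : ℝ := deriv (fun v => logMean s v) t

lemma logMean_log_ne {s t : ℝ} (hs : 0 < s) (ht : 0 < t) (hst : s ≠ t) :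
    Real.log t - Real.log s ≠ 0 := by
  intro h
  exact hst (Real.log_injOn_pos (Set.mem_Ioi.mpr hs) (Set.mem_Ioi.mpr ht) (by linarith))

lemma logMean_eq {s t : ℝ} (hs : 0 < s) (ht : 0 < t) (hst : s ≠ t) :
    logMean s t = (t - s) / (Real.log t - Real.log s) := by
  have hL : Real.log t - Real.log s ≠ 0 := logMean_log_ne hs ht hst
  have h1 : ∀ p : ℝ, s ^ (1 - p) * t ^ p
      = s * Real.exp ((Real.log t - Real.log s) * p) := by
    intro p
    have h2 : s * Real.exp ((Real.log t - Real.log s) * p)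
        = Real.exp (Real.log s + (Real.log t - Real.log s) * p) := by
      rw [Real.exp_add, Real.exp_log hs]
    rw [Real.rpow_def_of_pos hs, Real.rpow_def_of_pos ht, h2, ← Real.exp_add]
    congr 1; ring
  unfold logMean
  simp_rw [h1]
  rw [intervalIntegral.integral_const_mul,
    intervalIntegral.integral_comp_mul_left (fun x => Real.exp x) hL,
    mul_zero, mul_one, integral_exp, Real.exp_zero, Real.exp_sub,
    Real.exp_log hs, Real.exp_log ht, smul_eq_mul]
  field_simp

lemma logMean_hasDeriv₁ {s t : ℝ} (hs : 0 < s) (ht : 0 < t) (hst : s ≠ t) :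
    HasDerivAt (fun u => logMean u t)
      (((t - s)/s - (Real.log t - Real.log s)) / (Real.log t - Real.log s)^2) s := by
  have hL : Real.log t - Real.log s ≠ 0 := logMean_log_ne hs ht hst
  have hnum : HasDerivAt (fun u : ℝ => t - u) (-1) s := by
    simpa using (hasDerivAt_id s).const_sub t
  have hden : HasDerivAt (fun u : ℝ => Real.log t - Real.log u) (-s⁻¹) s := by
    simpa using (Real.hasDerivAt_log hs.ne').const_sub (Real.log t)
  have hd := hnum.div hden hL
  have hev : (fun u => logMean u t) =ᶠ[nhds s]
      (fun u => (t - u) / (Real.log t - Real.log u)) := by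
    have hopen : IsOpen {u : ℝ | 0 < u ∧ u ≠ t} :=
      (isOpen_lt continuous_const continuous_id).inter isOpen_ne
    filter_upwards [hopen.mem_nhds ⟨hs, hst⟩] with u hu
    exact logMean_eq hu.1 ht hu.2
  have := hd.congr_of_eventuallyEq hev
  refine this.congr_deriv ?_
  field_simp
  ring

lemma logMean_hasDeriv₂ {s t : ℝ} (hs : 0 < s) (ht : 0 < t) (hst : s ≠ t) :
    HasDerivAt (fun v => logMean s v)
      (((Real.log t - Real.log s) - (t - s)/t) / (Real.log t - Real.log s)^2) t := by
  have hL : Real.log t - Real.log s ≠ 0 := logMean_log_ne hs ht hst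
  have hnum : HasDerivAt (fun v : ℝ => v - s) (1 : ℝ) t := by
    simpa using (hasDerivAt_id t).sub_const s
  have hden : HasDerivAt (fun v : ℝ => Real.log v - Real.log s) (t⁻¹) t := by
    simpa using (Real.hasDerivAt_log ht.ne').sub_const (Real.log s)
  have hd := hnum.div hden hL
  have hev : (fun v => logMean s v) =ᶠ[nhds t]
      (fun v => (v - s) / (Real.log v - Real.log s)) := by
    have hopen : IsOpen {v : ℝ | 0 < v ∧ v ≠ s} :=
      (isOpen_lt continuous_const continuous_id).inter isOpen_ne
    filter_upwards [hopen.mem_nhds ⟨ht, fun h => hst h.symm⟩] with v hv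
    exact logMean_eq hs hv.1 (fun h => hv.2 h.symm)
  have := hd.congr_of_eventuallyEq hev
  refine this.congr_deriv ?_
  field_simp

lemma key_nonneg {s t : ℝ} (hs : 0 < s) (ht : 0 < t) :
    0 ≤ logMean₁ s t * (t - s) + logMean₂ s t * (s - t) := by
  rcases eq_or_ne s t with rfl | hst
  · simp
  · have hL : Real.log t - Real.log s ≠ 0 := logMean_log_ne hs ht hst
    set L := Real.log t - Real.log s with hLdef
    have h1 : logMean₁ s t = ((t - s)/s - L) / L^2 :=
      (logMean_hasDeriv₁ hs ht hst).deriv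
    have h2 : logMean₂ s t = (L - (t - s)/t) / L^2 :=
      (logMean_hasDeriv₂ hs ht hst).deriv
    have hel : Real.exp L = t / s := by
      rw [hLdef, Real.exp_sub, Real.exp_log hs, Real.exp_log ht]
    have hel' : Real.exp (-L) = s / t := by
      rw [Real.exp_neg, hel, inv_div]
    have hsinh : Real.sinh L = ((t - s)/s + (t - s)/t) / 2 := by
      rw [Real.sinh_eq, hel, hel']
      field_simp
      ring
    have hmain : 0 ≤ (t - s) * (Real.sinh L - L) := by
      rcases le_total s t with h | h
      · have hL0 : 0 ≤ L := sub_nonneg.mpr (Real.log_le_log hs h)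
        have h3 : L ≤ Real.sinh L := Real.self_le_sinh_iff.mpr hL0
        nlinarith
      · have hL0 : L ≤ 0 := sub_nonpos.mpr (Real.log_le_log ht h)
        have h3 : Real.sinh L ≤ L := Real.sinh_le_self_iff.mpr hL0
        nlinarith
    have hL2 : 0 < L^2 := by positivity
    rw [h1, h2]
    have expand : ((t - s)/s - L)/L^2 * (t - s) + (L - (t - s)/t)/L^2 * (s - t)
        = (t - s) * (2 * (Real.sinh L - L)) / L^2 := by
      rw [hsinh]
      field_simp
      ring
    rw [expand]
    apply div_nonneg _ hL2.le
    nlinarith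

/-- On-diagonal bound for a subgraph (given by its edge set `F`, edges recorded by
their endpoints) of a `d`-regular graph with uniform measure `μ = 1/|X|` and simple
random walk rates `1/d`: `B^on_F(ρ,ψ) ≥ (2/d) A_F(ρ,ψ)`. -/
theorem onDiagonal_bound (X : Type*) [Fintype X] [Nonempty X] (d : ℕ) (hd : 0 < d)
    (F : Finset (X × X)) (ρ : X → ℝ) (hρ : ∀ x, 0 < ρ x) (ψ : X → ℝ) :
    (∑ e ∈ F, ((Fintype.card X : ℝ))⁻¹ / (d : ℝ)^2 * ((1:ℝ)/2) * (ψ e.1 - ψ e.2)^2 *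
        (4 * logMean (ρ e.1) (ρ e.2)
          + logMean₁ (ρ e.1) (ρ e.2) * (ρ e.2 - ρ e.1)
          + logMean₂ (ρ e.1) (ρ e.2) * (ρ e.1 - ρ e.2)))
      ≥ (2 / (d : ℝ)) *
        ∑ e ∈ F, ((Fintype.card X : ℝ))⁻¹ / (d : ℝ) * (ψ e.1 - ψ e.2)^2 *
          logMean (ρ e.1) (ρ e.2) := by
  rw [ge_iff_le, Finset.mul_sum]
  apply Finset.sum_le_sum
  intro e _
  have hD := key_nonneg (hρ e.1) (hρ e.2)
  have hdd : (0:ℝ) < (d : ℝ) := Nat.cast_pos.mpr hd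
  have hμ : (0:ℝ) ≤ ((Fintype.card X : ℝ))⁻¹ := by positivity
  have hq : (0:ℝ) ≤ (ψ e.1 - ψ e.2)^2 := sq_nonneg _
  have h2 : 2 / (d:ℝ) * (((Fintype.card X : ℝ))⁻¹ / (d : ℝ) * (ψ e.1 - ψ e.2)^2 *
      logMean (ρ e.1) (ρ e.2))
      = ((Fintype.card X : ℝ))⁻¹ / (d : ℝ)^2 * ((1:ℝ)/2) * (ψ e.1 - ψ e.2)^2 *
        (4 * logMean (ρ e.1) (ρ e.2)) := by
    field_simp
    ring
  rw [h2]
  have hcoef : (0:ℝ) ≤ ((Fintype.card X : ℝ))⁻¹ / (d : ℝ)^2 * ((1:ℝ)/2) *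
      (ψ e.1 - ψ e.2)^2 := by positivity
  calc ((Fintype.card X : ℝ))⁻¹ / (d : ℝ)^2 * ((1:ℝ)/2) * (ψ e.1 - ψ e.2)^2 *
        (4 * logMean (ρ e.1) (ρ e.2))
      ≤ ((Fintype.card X : ℝ))⁻¹ / (d : ℝ)^2 * ((1:ℝ)/2) * (ψ e.1 - ψ e.2)^2 *
        (4 * logMean (ρ e.1) (ρ e.2)
          + (logMean₁ (ρ e.1) (ρ e.2) * (ρ e.2 - ρ e.1)
            + logMean₂ (ρ e.1) (ρ e.2) * (ρ e.1 - ρ e.2))) :=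
        mul_le_mul_of_nonneg_left (by linarith) hcoef
    _ = _ := by ring
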